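/- Suppose the fractal interpolant S satisfies the functional equation S(L_i(x)) = α_i S(x) + R_i(α_i, x) for x ∈ [x₁,x_N], where the classical interpolant s satisfies s(L_i(x)) = R_i(0, x), each α_i ∈ [0, κ a_i] with κ < 1, and for each i the map α ↦ R_i(α, x) is differentiable with |∂R_i/∂α(τ, x)| ≤ Z₀ for all x and all τ between 0 and α_i. Then ‖S − s‖_∞ ≤ |α|_∞ (‖s‖_∞ + Z₀)/(1 − |α|_∞), where |α|_∞ = max_i α_i. -/
import Mathlib


theorem stmt_6
    (N : ℕ) (hN : 2 ≤ N)
    (x : ℕ → ℝ)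
    (hmono : ∀ i, 1 ≤ i → i < N → x i < x (i + 1))
    (a : ℕ → ℝ) (ha : ∀ i, 1 ≤ i → i < N → a i = (x (i + 1) - x i) / (x N - x 1))
    (L : ℕ → ℝ → ℝ)
    (hL : ∀ i, 1 ≤ i → i < N → ∀ t : ℝ, L i t = a i * t + (x i - a i * x 1))
    (hcover : ∀ u ∈ Set.Icc (x 1) (x N),
      ∃ i t, 1 ≤ i ∧ i < N ∧ t ∈ Set.Icc (x 1) (x N) ∧ u = L i t)
    (α : ℕ → ℝ) (κ : ℝ) (hκ1 : κ < 1)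
    (hα : ∀ i, 1 ≤ i → i < N → α i ∈ Set.Icc 0 (κ * a i))
    (R : ℕ → ℝ → ℝ → ℝ) (R' : ℕ → ℝ → ℝ → ℝ) (Z₀ : ℝ)
    (hdiff : ∀ i, 1 ≤ i → i < N → ∀ t ∈ Set.Icc (x 1) (x N),
      ∀ τ ∈ Set.Icc 0 (α i),
        HasDerivAt (fun β => R i β t) (R' i τ t) τ ∧ |R' i τ t| ≤ Z₀)
    (S s : ℝ → ℝ)
    (hScont : ContinuousOn S (Set.Icc (x 1) (x N)))
    (hscont : ContinuousOn s (Set.Icc (x 1) (x N)))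
    (hSeq : ∀ i, 1 ≤ i → i < N → ∀ t ∈ Set.Icc (x 1) (x N),
      S (L i t) = α i * S t + R i (α i) t)
    (hseq : ∀ i, 1 ≤ i → i < N → ∀ t ∈ Set.Icc (x 1) (x N),
      s (L i t) = R i 0 t)
    (A Ms : ℝ) (hA0 : 0 ≤ A) (hA1 : A < 1)
    (hAmax : ∀ i, 1 ≤ i → i < N → α i ≤ A)
    (hMs : ∀ t ∈ Set.Icc (x 1) (x N), |s t| ≤ Ms) :
    ∀ u ∈ Set.Icc (x 1) (x N), |S u - s u| ≤ A * (Ms + Z₀) / (1 - A) := by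
  have hx1N : x 1 ≤ x N := by
    have key : ∀ j, 1 ≤ j → j ≤ N → x 1 ≤ x j := by
      intro j
      induction j with
      | zero => intro h; omega
      | succ k ih =>
        intro h1 h2
        rcases Nat.eq_or_lt_of_le h1 with h | h
        · rw [← h]
        · have hk1 : 1 ≤ k := by omega
          have hkN : k < N := by omega
          exact le_trans (ih hk1 (le_of_lt hkN)) (le_of_lt (hmono k hk1 hkN))
    exact key N (by omega) le_rfl
  have hne : (Set.Icc (x 1) (x N)).Nonempty := Set.nonempty_Icc.mpr hx1N
  obtain ⟨u₀, hu₀, hmax⟩ := isCompact_Icc.exists_isMaxOn hne ((hScont.sub hscont).abs)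
  set M := |S u₀ - s u₀| with hM
  have hmax' : ∀ t ∈ Set.Icc (x 1) (x N), |S t - s t| ≤ M := fun t ht => hmax ht
  obtain ⟨i, t, hi1, hiN, ht, hut⟩ := hcover u₀ hu₀
  have hαi := hα i hi1 hiN
  have hαi0 : 0 ≤ α i := hαi.1
  have hαA : α i ≤ A := hAmax i hi1 hiN
  have hR : |R i (α i) t - R i 0 t| ≤ Z₀ * α i := by
    have hconv : Convex ℝ (Set.Icc (0:ℝ) (α i)) := convex_Icc _ _
    have := hconv.norm_image_sub_le_of_norm_hasDerivWithin_le
      (f := fun β => R i β t) (f' := fun τ => R' i τ t) (C := Z₀)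
      (fun τ hτ => ((hdiff i hi1 hiN t ht τ hτ).1).hasDerivWithinAt)
      (fun τ hτ => by
        simpa [Real.norm_eq_abs] using (hdiff i hi1 hiN t ht τ hτ).2)
      (Set.right_mem_Icc.mpr hαi0) (Set.left_mem_Icc.mpr hαi0)
    rw [abs_sub_comm]
    simpa [Real.norm_eq_abs, abs_of_nonneg hαi0] using this
  have hZ0 : 0 ≤ Z₀ :=
    le_trans (abs_nonneg _) (hdiff i hi1 hiN t ht (α i) (Set.right_mem_Icc.mpr hαi0)).2
  have hMs0 : 0 ≤ Ms := le_trans (abs_nonneg _) (hMs t ht)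
  have hM0 : 0 ≤ M := abs_nonneg _
  have hDu : S u₀ - s u₀ = α i * (S t - s t) + α i * s t + (R i (α i) t - R i 0 t) := by
    rw [hut, hSeq i hi1 hiN t ht, hseq i hi1 hiN t ht]; ring
  have h1 : |α i * (S t - s t)| ≤ A * M := by
    rw [abs_mul, abs_of_nonneg hαi0]
    exact mul_le_mul hαA (hmax' t ht) (abs_nonneg _) hA0
  have h2 : |α i * s t| ≤ A * Ms := by
    rw [abs_mul, abs_of_nonneg hαi0]
    exact mul_le_mul hαA (hMs t ht) (abs_nonneg _) hA0
  have h3 : |R i (α i) t - R i 0 t| ≤ A * Z₀ := by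
    refine hR.trans ?_
    rw [mul_comm]
    exact mul_le_mul_of_nonneg_right hαA hZ0
  have hMle : M ≤ A * M + A * (Ms + Z₀) := by
    have h4 := abs_add_three (α i * (S t - s t)) (α i * s t) (R i (α i) t - R i 0 t)
    calc M = |α i * (S t - s t) + α i * s t + (R i (α i) t - R i 0 t)| := by rw [hM, hDu]
    _ ≤ |α i * (S t - s t)| + |α i * s t| + |R i (α i) t - R i 0 t| := h4
    _ ≤ A * M + A * (Ms + Z₀) := by linarith
  have hfinal : M ≤ A * (Ms + Z₀) / (1 - A) := by
    rw [le_div_iff₀ (by linarith)]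
    nlinarith
  intro u hu
  exact (hmax' u hu).trans hfinal
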